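/- Let X and Y be nonnegative absolutely continuous random variables with finite means and strictly increasing distribution functions F and G, and let h be a convex, strictly increasing distortion function. If X ≤_qmit Y, then X_h ≤_qmit Y_h. -/

import Mathlib

open MeasureTheory Set Filter

/-- The (generalized inverse) quantile function of a distribution function `F`. -/
noncomputable def quantile (F : ℝ → ℝ) (p : ℝ) : ℝ := sInf {x : ℝ | p ≤ F x}

/-- `F` is the distribution function of a nonnegative random variable
(with total mass one). -/
def IsNonnegCDF (F : ℝ → ℝ) : Prop :=
  Monotone F ∧ (∀ x : ℝ, x ≤ 0 → F x = 0) ∧ Tendsto F atTop (nhds 1)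

/-- A distortion function: a left-continuous increasing map of `[0,1]` onto itself
with `h 0 = 0` and `h 1 = 1`. -/
def IsDistortionFn (h : ℝ → ℝ) : Prop :=
  MonotoneOn h (Icc 0 1) ∧ (∀ p ∈ Ioc (0:ℝ) 1, ContinuousWithinAt h (Iio p) p) ∧
    h 0 = 0 ∧ h 1 = 1 ∧ MapsTo h (Icc 0 1) (Icc 0 1)

/-- `h` is starshaped: `h p / p` is increasing on `(0,1]`. -/
def Starshaped (h : ℝ → ℝ) : Prop := MonotoneOn (fun p => h p / p) (Ioc 0 1)

/-- `h` is antistarshaped: `h p / p` is decreasing on `(0,1]`. -/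
def Antistarshaped (h : ℝ → ℝ) : Prop := AntitoneOn (fun p => h p / p) (Ioc 0 1)

/-- Distribution function of the distorted random variable `X_h`,
whose survival function is `h ∘ (1 - F)`. -/
noncomputable def distortedCDF (h F : ℝ → ℝ) : ℝ → ℝ := fun x => 1 - h (1 - F x)

/-- `∫_0^{F⁻¹(p)} (1 - F(x)) dx`. -/
noncomputable def tttIntegral (F : ℝ → ℝ) (p : ℝ) : ℝ :=
  ∫ x in (0:ℝ)..(quantile F p), (1 - F x)

/-- `∫_{F⁻¹(p)}^∞ (1 - F(x)) dx`. -/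
noncomputable def ewIntegral (F : ℝ → ℝ) (p : ℝ) : ℝ :=
  ∫ x in Ioi (quantile F p), (1 - F x)

/-- `∫_0^{F⁻¹(p)} F(x) dx`. -/
noncomputable def mitIntegral (F : ℝ → ℝ) (p : ℝ) : ℝ :=
  ∫ x in (0:ℝ)..(quantile F p), F x

/-- Total time on test transform order. -/
def TTT_le (F G : ℝ → ℝ) : Prop := ∀ p ∈ Ioo (0:ℝ) 1, tttIntegral F p ≤ tttIntegral G p

/-- Excess wealth order. -/
def EW_le (F G : ℝ → ℝ) : Prop := ∀ p ∈ Ioo (0:ℝ) 1, ewIntegral F p ≤ ewIntegral G p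

/-- Decreasing mean residual life order. -/
def DMRL_le (F G : ℝ → ℝ) : Prop :=
  MonotoneOn (fun p => ewIntegral G p / ewIntegral F p) (Ioo (0:ℝ) 1)

/-- Quantile mean inactivity time order. -/
def QMIT_le (F G : ℝ → ℝ) : Prop :=
  AntitoneOn (fun p => mitIntegral F p / mitIntegral G p) (Ioo (0:ℝ) 1)


open scoped ENNReal

namespace QmitAux

variable {F G h : ℝ → ℝ}

lemma cdf_nonneg (h0 : ∀ x : ℝ, x ≤ 0 → F x = 0) (hmono : Monotone F) (x : ℝ) :
    0 ≤ F x := by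
  rcases le_total x 0 with hx | hx
  · rw [h0 x hx]
  · rw [← h0 0 le_rfl]; exact hmono hx

lemma cdf_lt_one (hmono : Monotone F) (hstrict : StrictMonoOn F (Ici 0))
    (htop : Tendsto F atTop (nhds 1)) (x : ℝ) : F x < 1 := by
  have hle : ∀ y, F y ≤ 1 := fun y => hmono.ge_of_tendsto htop y
  have h1 : F (max x 0) < F (max x 0 + 1) :=
    hstrict (le_max_right x 0) (by simp [le_max_right x 0]; linarith [le_max_right x 0])
      (by linarith)
  have := hle (max x 0 + 1)
  have := hmono (le_max_left x 0)
  linarith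

lemma quantile_spec (hmono : Monotone F) (h0 : ∀ x : ℝ, x ≤ 0 → F x = 0)
    (hstrict : StrictMonoOn F (Ici 0)) (hcont : Continuous F)
    (htop : Tendsto F atTop (nhds 1)) {q : ℝ} (hq : q ∈ Ioo (0:ℝ) 1) :
    0 < quantile F q ∧ F (quantile F q) = q ∧ ∀ x : ℝ, q ≤ F x ↔ quantile F q ≤ x := by
  obtain ⟨X, hX⟩ : ∃ X, q < F X := (htop.eventually (eventually_gt_nhds hq.2)).exists
  have hX0 : (0:ℝ) ≤ X := by
    by_contra hc
    rw [h0 X (by linarith)] at hX; linarith [hq.1]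
  obtain ⟨x₀, hx₀mem, hFx₀⟩ : ∃ x₀ ∈ Icc (0:ℝ) X, F x₀ = q := by
    have := intermediate_value_Icc hX0 hcont.continuousOn
    exact this ⟨by rw [h0 0 le_rfl]; exact hq.1.le, hX.le⟩
  have hx₀pos : 0 < x₀ := by
    rcases lt_or_ge 0 x₀ with h | h
    · exact h
    · rw [h0 x₀ h] at hFx₀; linarith [hq.1]
  have hset : {x : ℝ | q ≤ F x} = Ici x₀ := by
    ext x
    simp only [mem_setOf_eq, mem_Ici]
    constructor
    · intro hqx
      by_contra hc
      push_neg at hc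
      rcases le_total x 0 with h | h
      · rw [h0 x h] at hqx; linarith [hq.1]
      · have := hstrict (mem_Ici.2 h) (mem_Ici.2 hx₀mem.1) hc
        rw [hFx₀] at this; linarith
    · intro hx
      rw [← hFx₀]; exact hmono hx
  have hquant : quantile F q = x₀ := by
    rw [quantile, hset, csInf_Ici]
  rw [hquant]
  refine ⟨hx₀pos, hFx₀, fun x => ?_⟩
  have : (q ≤ F x) = (x ∈ Ici x₀) := by rw [← hset]; rfl
  rw [this]; rfl

lemma quantile_nonpos (h0 : ∀ x : ℝ, x ≤ 0 → F x = 0) (hmono : Monotone F)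
    {t : ℝ} (ht : t ≤ 0) : quantile F t = 0 := by
  have hset : {x : ℝ | t ≤ F x} = univ := by
    ext x; simp only [mem_setOf_eq, mem_univ, iff_true]
    exact ht.trans (cdf_nonneg h0 hmono x)
  rw [quantile, hset]
  exact Real.sInf_of_not_bddBelow fun ⟨b, hb⟩ => absurd (hb (mem_univ (b - 1))) (by simp)


structure CDF (F : ℝ → ℝ) : Prop where
  mono : Monotone F
  zero : ∀ x : ℝ, x ≤ 0 → F x = 0
  strict : StrictMonoOn F (Ici 0)
  cont : Continuous F
  top : Tendsto F atTop (nhds 1)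

lemma cdf_nonneg' (hF : CDF F) (x : ℝ) : 0 ≤ F x := by
  rcases le_total x 0 with hx | hx
  · rw [hF.zero x hx]
  · rw [← hF.zero 0 le_rfl]; exact hF.mono hx

lemma cdf_lt_one' (hF : CDF F) (x : ℝ) : F x < 1 :=
  cdf_lt_one hF.mono hF.strict hF.top x

lemma quantile_spec' (hF : CDF F) {q : ℝ} (hq : q ∈ Ioo (0:ℝ) 1) :
    0 < quantile F q ∧ F (quantile F q) = q ∧ ∀ x : ℝ, q ≤ F x ↔ quantile F q ≤ x :=
  quantile_spec hF.mono hF.zero hF.strict hF.cont hF.top hq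

lemma quantile_nonpos' (hF : CDF F) {t : ℝ} (ht : t ≤ 0) : quantile F t = 0 :=
  quantile_nonpos hF.zero hF.mono ht

lemma quantile_nonneg (hF : CDF F) {t : ℝ} (ht : t < 1) : 0 ≤ quantile F t := by
  rcases le_or_gt t 0 with h | h
  · rw [quantile_nonpos' hF h]
  · exact (quantile_spec' hF ⟨h, ht⟩).1.le

lemma quantile_mono_lt_one (hF : CDF F) {t t' : ℝ} (ht : 0 ≤ t) (htt' : t ≤ t') (ht' : t' < 1) :
    quantile F t ≤ quantile F t' := by
  rcases eq_or_lt_of_le ht with h | h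
  · rw [quantile_nonpos' hF h.symm.le]; exact quantile_nonneg hF ht'
  · obtain ⟨_, hFq', _⟩ := quantile_spec' hF (⟨lt_of_lt_of_le h htt', ht'⟩ : t' ∈ Ioo 0 1)
    exact ((quantile_spec' hF ⟨h, lt_of_le_of_lt htt' ht'⟩).2.2 _).1 (by rw [hFq']; exact htt')

lemma mit_zero (hF : CDF F) {t : ℝ} (ht : t ≤ 0) : mitIntegral F t = 0 := by
  rw [mitIntegral, quantile_nonpos' hF ht, intervalIntegral.integral_same]

lemma mit_nonneg (hF : CDF F) {t : ℝ} (ht : t < 1) : 0 ≤ mitIntegral F t :=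
  intervalIntegral.integral_nonneg (quantile_nonneg hF ht) (fun x _ => cdf_nonneg' hF x)

lemma mit_mono (hF : CDF F) {t t' : ℝ} (ht : 0 ≤ t) (htt' : t ≤ t') (ht' : t' < 1) :
    mitIntegral F t ≤ mitIntegral F t' := by
  have hq := quantile_mono_lt_one hF ht htt' ht'
  have h1 : mitIntegral F t + ∫ x in (quantile F t)..(quantile F t'), F x = mitIntegral F t' :=
    intervalIntegral.integral_add_adjacent_intervals
      (hF.cont.intervalIntegrable _ _) (hF.cont.intervalIntegrable _ _)
  have h2 : 0 ≤ ∫ x in (quantile F t)..(quantile F t'), F x :=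
    intervalIntegral.integral_nonneg hq (fun x _ => cdf_nonneg' hF x)
  linarith

lemma mit_pos (hF : CDF F) {t : ℝ} (ht : t ∈ Ioo (0:ℝ) 1) : 0 < mitIntegral F t := by
  obtain ⟨hqpos, hFq, _⟩ := quantile_spec' hF ht
  refine intervalIntegral.intervalIntegral_pos_of_pos_on (hF.cont.intervalIntegrable _ _) ?_ hqpos
  intro x hx
  have := hF.strict (mem_Ici.2 le_rfl) (mem_Ici.2 hx.1.le) hx.1
  rw [hF.zero 0 le_rfl] at this; exact this

lemma mit_eq_setIntegral (hF : CDF F) {t : ℝ} (ht : t < 1) :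
    mitIntegral F t = ∫ x in Ioc 0 (quantile F t), F x :=
  intervalIntegral.integral_of_le (quantile_nonneg hF ht)


noncomputable def Hfn (h : ℝ → ℝ) : ℝ → ℝ := fun q => 1 - h (1 - q)
noncomputable def wfn (h : ℝ → ℝ) : ℝ → ℝ := fun u => Hfn h u / u
noncomputable def phi (h : ℝ → ℝ) (p : ℝ) : ℝ :=
  sInf {q : ℝ | q ∈ Icc (0:ℝ) 1 ∧ p ≤ Hfn h q}
noncomputable def tau (h : ℝ → ℝ) (s : ℝ) : ℝ :=
  sSup {u : ℝ | u ∈ Ioo (0:ℝ) 1 ∧ s < wfn h u}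

variable {h : ℝ → ℝ}

lemma h_le_id (hdist : IsDistortionFn h) (hconv : ConvexOn ℝ (Icc 0 1) h)
    {t : ℝ} (ht : t ∈ Icc (0:ℝ) 1) : h t ≤ t := by
  have := hconv.2 (show (0:ℝ) ∈ Icc (0:ℝ) 1 by simp) (show (1:ℝ) ∈ Icc (0:ℝ) 1 by simp)
    (show (0:ℝ) ≤ 1 - t by linarith [ht.2]) (show (0:ℝ) ≤ t from ht.1) (by ring)
  simpa [hdist.2.2.1, hdist.2.2.2.1, smul_eq_mul] using this

lemma Hfn_mono (hdist : IsDistortionFn h) :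
    MonotoneOn (Hfn h) (Icc (0:ℝ) 1) := by
  intro a ha b hb hab
  have := hdist.1 (show 1 - b ∈ Icc (0:ℝ) 1 from ⟨by linarith [hb.2], by linarith [hb.1]⟩)
    (show 1 - a ∈ Icc (0:ℝ) 1 from ⟨by linarith [ha.2], by linarith [ha.1]⟩)
    (by linarith)
  simp only [Hfn]; linarith

lemma Hfn_zero (hdist : IsDistortionFn h) : Hfn h 0 = 0 := by
  simp [Hfn, hdist.2.2.2.1]

lemma Hfn_one (hdist : IsDistortionFn h) : Hfn h 1 = 1 := by
  simp [Hfn, hdist.2.2.1]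

lemma Hfn_ge_id (hdist : IsDistortionFn h) (hconv : ConvexOn ℝ (Icc 0 1) h)
    {q : ℝ} (hq : q ∈ Icc (0:ℝ) 1) : q ≤ Hfn h q := by
  have := h_le_id hdist hconv (t := 1 - q) ⟨by linarith [hq.2], by linarith [hq.1]⟩
  simp only [Hfn]; linarith

lemma Hfn_le_one (hdist : IsDistortionFn h) {q : ℝ} (hq : q ∈ Icc (0:ℝ) 1) :
    Hfn h q ≤ 1 := by
  have := (hdist.2.2.2.2 (show 1 - q ∈ Icc (0:ℝ) 1 from ⟨by linarith [hq.2], by linarith [hq.1]⟩)).1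
  simp only [Hfn]; linarith

lemma Hfn_nonneg (hdist : IsDistortionFn h) {q : ℝ} (hq : q ∈ Icc (0:ℝ) 1) :
    0 ≤ Hfn h q := by
  have := (hdist.2.2.2.2 (show 1 - q ∈ Icc (0:ℝ) 1 from ⟨by linarith [hq.2], by linarith [hq.1]⟩)).2
  simp only [Hfn]; linarith

/-- antistar: `Hfn h v * u ≤ Hfn h u * v` for `0 < u ≤ v ≤ 1`. -/
lemma Hfn_antistar (hdist : IsDistortionFn h) (hconv : ConvexOn ℝ (Icc 0 1) h)
    {u v : ℝ} (hu : 0 < u) (huv : u ≤ v) (hv : v ≤ 1) :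
    Hfn h v * u ≤ Hfn h u * v := by
  have hv0 : 0 < v := lt_of_lt_of_le hu huv
  have key : h (1 - u) ≤ (u / v) * h (1 - v) + (1 - u / v) * h 1 := by
    have := hconv.2 (show 1 - v ∈ Icc (0:ℝ) 1 from ⟨by linarith, by linarith⟩)
      (show (1:ℝ) ∈ Icc (0:ℝ) 1 by simp)
      (show (0:ℝ) ≤ u / v by positivity)
      (show (0:ℝ) ≤ 1 - u / v by rw [sub_nonneg]; exact div_le_one_of_le₀ huv hv0.le)
      (by ring)
    have heq : (u / v) • (1 - v) + (1 - u / v) • (1:ℝ) = 1 - u := by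
      rw [smul_eq_mul, smul_eq_mul]; field_simp; ring
    rw [heq] at this
    simpa [smul_eq_mul] using this
  rw [hdist.2.2.2.1] at key
  simp only [Hfn]
  have : v * h (1 - u) ≤ u * h (1 - v) + v - u := by
    have := mul_le_mul_of_nonneg_left key hv0.le
    calc v * h (1 - u) ≤ v * ((u / v) * h (1 - v) + (1 - u / v) * 1) := this
    _ = u * h (1 - v) + v - u := by field_simp; ring
  nlinarith

lemma phi_spec (hdist : IsDistortionFn h) (hconv : ConvexOn ℝ (Icc 0 1) h)
    {p : ℝ} (hp : p ∈ Ioo (0:ℝ) 1) :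
    phi h p ∈ Ioc 0 p ∧ ∀ u ∈ Ico (0:ℝ) 1, (p ≤ Hfn h u ↔ phi h p ≤ u) := by
  set S := {q : ℝ | q ∈ Icc (0:ℝ) 1 ∧ p ≤ Hfn h q} with hS
  have hne : S.Nonempty := ⟨1, ⟨by norm_num, by norm_num⟩, by rw [Hfn_one hdist]; exact hp.2.le⟩
  have hbdd : BddBelow S := ⟨0, fun q hq => hq.1.1⟩
  have hphi0 : 0 ≤ phi h p := le_csInf hne fun q hq => hq.1.1
  have hphip : phi h p ≤ p :=
    csInf_le hbdd ⟨⟨hp.1.le, hp.2.le⟩, Hfn_ge_id hdist hconv ⟨hp.1.le, hp.2.le⟩⟩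
  have hup : ∀ u, phi h p < u → u ≤ 1 → p ≤ Hfn h u := by
    intro u hu hu1
    obtain ⟨q', hq'S, hq'⟩ := exists_lt_of_csInf_lt hne hu
    exact hq'S.2.trans (Hfn_mono hdist hq'S.1 ⟨hq'S.1.1.trans hq'.le, hu1⟩ hq'.le)
  have hkey : p ≤ Hfn h (phi h p) := by
    have hlc : ContinuousWithinAt h (Iio (1 - phi h p)) (1 - phi h p) :=
      hdist.2.1 _ ⟨by linarith [hp.2], by linarith⟩
    have hmap : Tendsto (fun q : ℝ => 1 - q) (nhdsWithin (phi h p) (Ioi (phi h p)))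
        (nhdsWithin (1 - phi h p) (Iio (1 - phi h p))) := by
      apply ((continuous_const.sub continuous_id).continuousWithinAt).tendsto_nhdsWithin
      intro q hq
      simp only [mem_Ioi, mem_Iio] at *
      simpa using hq
    have hT : Tendsto (fun q : ℝ => Hfn h q) (nhdsWithin (phi h p) (Ioi (phi h p)))
        (nhds (Hfn h (phi h p))) := by
      have := (hlc.tendsto).comp hmap
      exact tendsto_const_nhds.sub this
    refine ge_of_tendsto hT ?_
    have hev : ∀ᶠ q in nhdsWithin (phi h p) (Ioi (phi h p)), q < 1 :=
      eventually_nhdsWithin_of_eventually_nhds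
        (Filter.Tendsto.eventually_lt_const (by linarith [hp.2] : phi h p < 1) tendsto_id)
    filter_upwards [hev, self_mem_nhdsWithin] with q h1 h2
    exact hup q h2 h1.le
  have hphipos : 0 < phi h p := by
    rcases eq_or_lt_of_le hphi0 with h0 | h0
    · exfalso; rw [← h0, Hfn_zero hdist] at hkey; linarith [hp.1]
    · exact h0
  refine ⟨⟨hphipos, hphip⟩, fun u hu => ⟨fun hpu => ?_, fun hpu => ?_⟩⟩
  · exact csInf_le hbdd ⟨⟨hu.1, hu.2.le⟩, hpu⟩
  · exact hkey.trans (Hfn_mono hdist ⟨hphi0, by linarith [hu.2]⟩ ⟨hu.1, hu.2.le⟩ hpu)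

lemma phi_mono (hdist : IsDistortionFn h) (hconv : ConvexOn ℝ (Icc 0 1) h)
    {p₁ p₂ : ℝ} (hp₁ : p₁ ∈ Ioo (0:ℝ) 1) (hp₂ : p₂ ∈ Ioo (0:ℝ) 1) (hp : p₁ ≤ p₂) :
    phi h p₁ ≤ phi h p₂ := by
  obtain ⟨hmem₂, _⟩ := phi_spec hdist hconv hp₂
  obtain ⟨_, hiff₁⟩ := phi_spec hdist hconv hp₁
  refine (hiff₁ (phi h p₂) ⟨hmem₂.1.le, lt_of_le_of_lt hmem₂.2 hp₂.2⟩).1 ?_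
  exact hp.trans ((phi_spec hdist hconv hp₂).2 (phi h p₂)
    ⟨hmem₂.1.le, lt_of_le_of_lt hmem₂.2 hp₂.2⟩ |>.2 le_rfl)

lemma wfn_anti (hdist : IsDistortionFn h) (hconv : ConvexOn ℝ (Icc 0 1) h)
    {u v : ℝ} (hu : 0 < u) (huv : u ≤ v) (hv : v < 1) : wfn h v ≤ wfn h u := by
  have hv0 : 0 < v := lt_of_lt_of_le hu huv
  rw [wfn, wfn, div_le_div_iff₀ hv0 hu]
  exact Hfn_antistar hdist hconv hu huv hv.le

lemma tau_nonneg (s : ℝ) : 0 ≤ tau h s :=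
  Real.sSup_nonneg fun u hu => hu.1.1.le

lemma tau_le_one (s : ℝ) : tau h s ≤ 1 :=
  Real.sSup_le (fun u hu => hu.1.2.le) zero_le_one

lemma tau_anti : Antitone (tau h) := by
  intro s s' hss'
  rcases eq_empty_or_nonempty {u : ℝ | u ∈ Ioo (0:ℝ) 1 ∧ s' < wfn h u} with he | hne
  · rw [tau, he, Real.sSup_empty]; exact tau_nonneg s
  · exact csSup_le_csSup ⟨1, fun u hu => hu.1.2.le⟩ hne
      (fun u hu => ⟨hu.1, lt_of_le_of_lt hss' hu.2⟩)

lemma tau_measure (hdist : IsDistortionFn h) (hconv : ConvexOn ℝ (Icc 0 1) h)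
    {u : ℝ} (hu : u ∈ Ioo (0:ℝ) 1) :
    volume {s : ℝ | s ∈ Ioi (0:ℝ) ∧ u ≤ tau h s} = ENNReal.ofReal (wfn h u) := by
  have hw0 : 0 ≤ wfn h u := div_nonneg (Hfn_nonneg hdist ⟨hu.1.le, hu.2.le⟩) hu.1.le
  have hsub1 : Ioo (0:ℝ) (wfn h u) ⊆ {s : ℝ | s ∈ Ioi (0:ℝ) ∧ u ≤ tau h s} := by
    intro s hs
    refine ⟨hs.1, le_csSup ⟨1, fun u' hu' => hu'.1.2.le⟩ ⟨hu, hs.2⟩⟩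
  have hsub2 : {s : ℝ | s ∈ Ioi (0:ℝ) ∧ u ≤ tau h s} ⊆ Ioc (0:ℝ) (wfn h u) := by
    rintro s ⟨hs0, hsτ⟩
    refine ⟨hs0, ?_⟩
    by_contra hc
    push_neg at hc
    -- hc : wfn h u < s
    have hHu : Hfn h u < s * u := by
      rw [wfn, div_lt_iff₀ hu.1] at hc; linarith [hc]
    set S := {u' : ℝ | u' ∈ Ioo (0:ℝ) 1 ∧ s < wfn h u'} with hSdef
    have htaueq : tau h s = sSup S := rfl
    have hsτ' : u ≤ sSup S := htaueq ▸ hsτ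
    have hne : S.Nonempty := by
      rcases eq_empty_or_nonempty S with he | hne
      · exfalso
        rw [he, Real.sSup_empty] at hsτ'
        linarith [hu.1]
      · exact hne
    have hSlt : ∀ u' ∈ S, u' < u := by
      intro u' hu'
      by_contra hge
      push_neg at hge
      have := wfn_anti hdist hconv hu.1 hge hu'.1.2
      linarith [hu'.2]
    set ε := (s * u - Hfn h u) / s with hε
    have hspos : 0 < s := hs0
    have hεpos : 0 < ε := div_pos (by linarith) hspos
    obtain ⟨u', hu'S, hu'gt⟩ := exists_lt_of_lt_csSup hne
      (show u - ε < sSup S from lt_of_lt_of_le (by linarith) hsτ')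
    have h1 : s * u' < Hfn h u' := by
      have := hu'S.2
      rw [wfn, lt_div_iff₀ hu'S.1.1] at this; linarith
    have h2 : Hfn h u' ≤ Hfn h u :=
      Hfn_mono hdist ⟨hu'S.1.1.le, hu'S.1.2.le⟩ ⟨hu.1.le, hu.2.le⟩ (hSlt u' hu'S).le
    have h3 : s * (u - ε) < s * u' := by
      exact mul_lt_mul_of_pos_left hu'gt hspos
    have h4 : s * (u - ε) = Hfn h u := by
      rw [hε, mul_sub, mul_div_cancel₀ _ hspos.ne']; ring
    linarith
  have e1 : volume (Ioc (0:ℝ) (wfn h u)) = ENNReal.ofReal (wfn h u) := by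
    rw [Real.volume_Ioc, sub_zero]
  have e2 : volume (Ioo (0:ℝ) (wfn h u)) = ENNReal.ofReal (wfn h u) := by
    rw [Real.volume_Ioo, sub_zero]
  refine le_antisymm (e1 ▸ measure_mono hsub2) (e2 ▸ measure_mono hsub1)


/-- Key pointwise rearrangement inequality. -/
lemma key_ineq (A B : ℝ → ℝ) (q₁ q₂ σ τ : ℝ)
    (hq₁ : 0 ≤ q₁) (hq₁₂ : q₁ ≤ q₂) (hστ : σ ≤ τ) (hσ : 0 ≤ σ)
    (hBmono : ∀ u v, 0 ≤ u → u ≤ v → v ≤ q₂ → B u ≤ B v)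
    (hA0 : ∀ u, 0 ≤ u → u ≤ q₂ → 0 ≤ A u)
    (hB0 : ∀ u, 0 ≤ u → u ≤ q₂ → 0 ≤ B u)
    (hcross : ∀ u v, 0 ≤ u → u ≤ v → v ≤ q₂ → A v * B u ≤ A u * B v) :
    A (q₂ ⊓ σ) * B (q₁ ⊓ τ) + A (q₂ ⊓ τ) * B (q₁ ⊓ σ) ≤
      A (q₁ ⊓ σ) * B (q₂ ⊓ τ) + A (q₁ ⊓ τ) * B (q₂ ⊓ σ) := by
  rcases le_total σ q₁ with hσq | hσq
  · have e1 : q₁ ⊓ σ = σ := min_eq_right hσq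
    have e2 : q₂ ⊓ σ = σ := min_eq_right (hσq.trans hq₁₂)
    set u := q₁ ⊓ τ with hu
    set v := q₂ ⊓ τ with hv
    have hσu : σ ≤ u := le_min hσq hστ
    have huv : u ≤ v := min_le_min hq₁₂ le_rfl
    have hu0 : 0 ≤ u := le_trans hσ hσu
    have hvq : v ≤ q₂ := min_le_left _ _
    have huq : u ≤ q₂ := le_trans huv hvq
    have c1 : A v * B u ≤ A u * B v := hcross u v hu0 huv hvq
    have c2 : A u * B σ ≤ A σ * B u := hcross σ u hσ hσu huq
    have hσq2 : σ ≤ q₂ := hσq.trans hq₁₂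
    have hBσ : 0 ≤ B σ := hB0 σ hσ hσq2
    have hBu : 0 ≤ B u := hB0 u hu0 huq
    have hBuv : B u ≤ B v := hBmono u v hu0 huv hvq
    have hAσ : 0 ≤ A σ := hA0 σ hσ hσq2
    have hAu : 0 ≤ A u := hA0 u hu0 huq
    have hAv : 0 ≤ A v := hA0 v (le_trans hu0 huv) hvq
    rw [e1, e2]
    -- goal : A σ * B u + A v * B σ ≤ A σ * B v + A u * B σ
    rcases eq_or_lt_of_le hBu with hBu0 | hBupos
    · have hBσ0 : B σ = 0 := le_antisymm (by
        have := hBmono σ u hσ hσu huq; linarith) hBσ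
      rw [hBσ0, ← hBu0]
      ring_nf
      nlinarith [mul_nonneg hAσ (hB0 v (le_trans hu0 huv) hvq)]
    · nlinarith [mul_le_mul_of_nonneg_right c1 hBσ,
        mul_le_mul_of_nonneg_right c2 (sub_nonneg.2 hBuv), hBupos,
        mul_nonneg hAσ hBσ]
  · have e1 : q₁ ⊓ σ = q₁ := min_eq_left hσq
    have e2 : q₁ ⊓ τ = q₁ := min_eq_left (hσq.trans hστ)
    rw [e1, e2]
    have c1 : A (q₂ ⊓ σ) * B q₁ ≤ A q₁ * B (q₂ ⊓ σ) :=
      hcross q₁ (q₂ ⊓ σ) hq₁ (le_min hq₁₂ hσq) (min_le_left _ _)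
    have c2 : A (q₂ ⊓ τ) * B q₁ ≤ A q₁ * B (q₂ ⊓ τ) :=
      hcross q₁ (q₂ ⊓ τ) hq₁ (le_min hq₁₂ (hσq.trans hστ)) (min_le_left _ _)
    linarith


lemma psi_repr (hF : CDF F) (hdist : IsDistortionFn h) (hconv : ConvexOn ℝ (Icc 0 1) h)
    {q : ℝ} (hq : q ∈ Ioo (0:ℝ) 1) :
    ENNReal.ofReal (∫ x in (0:ℝ)..(quantile F q), Hfn h (F x)) =
      ∫⁻ s in Ioi (0:ℝ), ENNReal.ofReal (mitIntegral F (q ⊓ tau h s)) := by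
  obtain ⟨hcpos, hFc, hciff⟩ := quantile_spec' hF hq
  set c := quantile F q with hcdef
  have hrange : ∀ x : ℝ, F x ∈ Icc (0:ℝ) 1 :=
    fun x => ⟨cdf_nonneg' hF x, (cdf_lt_one' hF x).le⟩
  have hHFmono : Monotone (fun x => Hfn h (F x)) :=
    fun x y hxy => Hfn_mono hdist (hrange x) (hrange y) (hF.mono hxy)
  have hint : IntegrableOn (fun x => Hfn h (F x)) (Ioc 0 c) volume :=
    (hHFmono.intervalIntegrable (μ := volume) (a := 0) (b := c)).1
  -- the kernel
  set K : ℝ → ℝ → ℝ≥0∞ :=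
    fun x s => if F x ≤ tau h s then ENNReal.ofReal (F x) else 0 with hKdef
  have hKsetmeas : ∀ x : ℝ, MeasurableSet {s : ℝ | F x ≤ tau h s} := by
    intro x
    have : OrdConnected {s : ℝ | F x ≤ tau h s} :=
      ⟨fun a _ b hb z hz => le_trans hb (tau_anti hz.2)⟩
    exact this.measurableSet
  have hKs : ∀ x : ℝ, x ∈ Ioc (0:ℝ) c →
      (∫⁻ s in Ioi (0:ℝ), K x s) = ENNReal.ofReal (Hfn h (F x)) := by
    intro x hx
    have hFx : F x ∈ Ioo (0:ℝ) 1 := by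
      constructor
      · have := hF.strict (mem_Ici.2 le_rfl) (mem_Ici.2 hx.1.le) hx.1
        rwa [hF.zero 0 le_rfl] at this
      · exact cdf_lt_one' hF x
    have e0 : ∀ s : ℝ, K x s = ENNReal.ofReal (F x) *
        ({s' : ℝ | F x ≤ tau h s'}.indicator (fun _ => (1:ℝ≥0∞)) s) := by
      intro s
      by_cases hxs : F x ≤ tau h s
      · rw [hKdef]; simp [hxs, indicator_of_mem (show s ∈ {s' : ℝ | F x ≤ tau h s'} from hxs)]
      · rw [hKdef]; simp [hxs, indicator_of_notMem (show s ∉ {s' : ℝ | F x ≤ tau h s'} from hxs)]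
    simp only [e0]
    rw [lintegral_const_mul' _ _ ENNReal.ofReal_ne_top]
    have : (∫⁻ s in Ioi (0:ℝ), {s' : ℝ | F x ≤ tau h s'}.indicator (fun _ => (1:ℝ≥0∞)) s)
        = volume {s : ℝ | s ∈ Ioi (0:ℝ) ∧ F x ≤ tau h s} := by
      have h1 : (∫⁻ s in Ioi (0:ℝ), {s' : ℝ | F x ≤ tau h s'}.indicator (fun _ => (1:ℝ≥0∞)) s)
          = (volume.restrict (Ioi (0:ℝ))) {s' : ℝ | F x ≤ tau h s'} := by
        rw [← lintegral_indicator_one (hKsetmeas x)]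
        rfl
      rw [h1, Measure.restrict_apply (hKsetmeas x)]
      congr 1
      ext s; simp only [mem_inter_iff, mem_setOf_eq, mem_Ioi]; tauto
    rw [this, tau_measure hdist hconv hFx, ← ENNReal.ofReal_mul (cdf_nonneg' hF x)]
    congr 1
    rw [wfn, mul_div_cancel₀ _ (ne_of_gt hFx.1)]
  -- left side to double integral
  have hKmeas : Measurable (Function.uncurry K) := by
    rw [hKdef]
    apply Measurable.ite
    · exact measurableSet_le (hF.cont.measurable.comp measurable_fst)
        ((tau_anti.measurable).comp measurable_snd)
    · exact ENNReal.measurable_ofReal.comp (hF.cont.measurable.comp measurable_fst)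
    · exact measurable_const
  have step1 : ENNReal.ofReal (∫ x in (0:ℝ)..c, Hfn h (F x)) =
      ∫⁻ x in Ioc (0:ℝ) c, ∫⁻ s in Ioi (0:ℝ), K x s := by
    rw [intervalIntegral.integral_of_le hcpos.le,
      ofReal_integral_eq_lintegral_ofReal hint
        (ae_of_all _ fun x => Hfn_nonneg hdist (hrange x))]
    exact setLIntegral_congr_fun measurableSet_Ioc
      (fun x hx => (hKs x hx).symm)
  have step2 : (∫⁻ x in Ioc (0:ℝ) c, ∫⁻ s in Ioi (0:ℝ), K x s)
      = ∫⁻ s in Ioi (0:ℝ), ∫⁻ x in Ioc (0:ℝ) c, K x s :=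
    lintegral_lintegral_swap hKmeas.aemeasurable
  -- inner integral evaluation
  have step3 : ∀ s : ℝ, s ∈ Ioi (0:ℝ) →
      (∫⁻ x in Ioc (0:ℝ) c, K x s) = ENNReal.ofReal (mitIntegral F (q ⊓ tau h s)) := by
    intro s _
    set t := tau h s with htdef
    have ht0 : 0 ≤ t := tau_nonneg s
    have ht1 : t ≤ 1 := tau_le_one s
    rcases le_or_gt q t with hqt | htq
    · have hmin : q ⊓ t = q := min_eq_left hqt
      rw [hmin]
      have : ∀ x ∈ Ioc (0:ℝ) c, K x s = ENNReal.ofReal (F x) := by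
        intro x hx
        have : F x ≤ t := le_trans (by rw [← hFc]; exact hF.mono hx.2) hqt
        rw [hKdef]; simp [show F x ≤ tau h s from this]
      rw [setLIntegral_congr_fun measurableSet_Ioc this,
        ← ofReal_integral_eq_lintegral_ofReal (hF.cont.integrableOn_Ioc)
          (ae_of_all _ fun x => cdf_nonneg' hF x),
        ← mit_eq_setIntegral hF hq.2]
    · rcases eq_or_lt_of_le ht0 with ht0' | ht0'
      · have hmin : q ⊓ t = t := min_eq_right htq.le
        rw [hmin, ← ht0', mit_zero hF le_rfl]
        have : ∀ x ∈ Ioc (0:ℝ) c, K x s = 0 := by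
          intro x hx
          have hFxpos : 0 < F x := by
            have := hF.strict (mem_Ici.2 le_rfl) (mem_Ici.2 hx.1.le) hx.1
            rwa [hF.zero 0 le_rfl] at this
          simp only [hKdef]
          rw [if_neg (not_le.2 (show tau h s < F x by rw [← htdef, ← ht0']; exact hFxpos))]
        rw [setLIntegral_congr_fun measurableSet_Ioc this]
        simp
      · -- 0 < t < q
        have htIoo : t ∈ Ioo (0:ℝ) 1 := ⟨ht0', lt_trans htq hq.2⟩
        obtain ⟨hc'pos, hFc', hc'iff⟩ := quantile_spec' hF htIoo
        set c' := quantile F t with hc'def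
        have hc'c : c' ≤ c := (hc'iff c).1 (le_of_le_of_eq htq.le hFc.symm)
        have hmin : q ⊓ t = t := min_eq_right htq.le
        have hindeq : ∀ x : ℝ, (Ioc (0:ℝ) c).indicator (fun x => K x s) x
            = (Ioc (0:ℝ) c').indicator (fun x => ENNReal.ofReal (F x)) x := by
          intro x
          by_cases hx1 : x ∈ Ioc (0:ℝ) c'
          · have hx2 : x ∈ Ioc (0:ℝ) c := ⟨hx1.1, hx1.2.trans hc'c⟩
            rw [indicator_of_mem hx1, indicator_of_mem hx2]
            have : F x ≤ t := by rw [← hFc']; exact hF.mono hx1.2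
            rw [hKdef]; simp [show F x ≤ tau h s from this]
          · rw [indicator_of_notMem hx1]
            by_cases hx2 : x ∈ Ioc (0:ℝ) c
            · rw [indicator_of_mem hx2]
              have hxc' : c' < x := by
                rcases lt_or_ge c' x with hlt | hle
                · exact hlt
                · exact absurd ⟨hx2.1, hle⟩ hx1
              have : t < F x := by
                rw [← hFc']
                exact hF.strict (mem_Ici.2 hc'pos.le) (mem_Ici.2 (hc'pos.le.trans hxc'.le))
                  hxc'
              have this' : tau h s < F x := htdef ▸ this
              simp only [hKdef]
              rw [if_neg (not_le.2 this')]
            · rw [indicator_of_notMem hx2]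
        calc (∫⁻ x in Ioc (0:ℝ) c, K x s)
            = ∫⁻ x, (Ioc (0:ℝ) c).indicator (fun x => K x s) x :=
              (lintegral_indicator measurableSet_Ioc _).symm
          _ = ∫⁻ x, (Ioc (0:ℝ) c').indicator (fun x => ENNReal.ofReal (F x)) x := by
              exact lintegral_congr hindeq
          _ = ∫⁻ x in Ioc (0:ℝ) c', ENNReal.ofReal (F x) :=
              lintegral_indicator measurableSet_Ioc _
          _ = ENNReal.ofReal (mitIntegral F (q ⊓ t)) := by
              rw [← ofReal_integral_eq_lintegral_ofReal (hF.cont.integrableOn_Ioc)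
                (ae_of_all _ fun x => cdf_nonneg' hF x), hmin,
                ← mit_eq_setIntegral hF htIoo.2]
  rw [step1, step2]
  exact setLIntegral_congr_fun measurableSet_Ioi step3

lemma psi_cross (hF : CDF F) (hG : CDF G) (hdist : IsDistortionFn h)
    (hconv : ConvexOn ℝ (Icc 0 1) h)
    (hle : AntitoneOn (fun p => mitIntegral F p / mitIntegral G p) (Ioo (0:ℝ) 1))
    {q₁ q₂ : ℝ} (h1 : q₁ ∈ Ioo (0:ℝ) 1) (h2 : q₂ ∈ Ioo (0:ℝ) 1) (h12 : q₁ ≤ q₂) :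
    (∫ x in (0:ℝ)..(quantile F q₂), Hfn h (F x)) * (∫ x in (0:ℝ)..(quantile G q₁), Hfn h (G x)) ≤
      (∫ x in (0:ℝ)..(quantile F q₁), Hfn h (F x)) *
        (∫ x in (0:ℝ)..(quantile G q₂), Hfn h (G x)) := by
  set A := mitIntegral F with hA
  set B := mitIntegral G with hB
  have hA0 : ∀ u, 0 ≤ u → u ≤ q₂ → 0 ≤ A u := fun u _ hu2 =>
    mit_nonneg hF (lt_of_le_of_lt hu2 h2.2)
  have hB0 : ∀ u, 0 ≤ u → u ≤ q₂ → 0 ≤ B u := fun u _ hu2 =>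
    mit_nonneg hG (lt_of_le_of_lt hu2 h2.2)
  have hBmono : ∀ u v, 0 ≤ u → u ≤ v → v ≤ q₂ → B u ≤ B v := fun u v hu huv hv2 =>
    mit_mono hG hu huv (lt_of_le_of_lt hv2 h2.2)
  have hcross : ∀ u v, 0 ≤ u → u ≤ v → v ≤ q₂ → A v * B u ≤ A u * B v := by
    intro u v hu huv hv2
    rcases eq_or_lt_of_le hu with hu0 | hu0
    · have e1 : A u = 0 := mit_zero hF (le_of_eq hu0.symm)
      have e2 : B u = 0 := mit_zero hG (le_of_eq hu0.symm)
      simp [e1, e2]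
    · rcases eq_or_lt_of_le huv with huv0 | huv0
      · rw [huv0]
      · have hvIoo : v ∈ Ioo (0:ℝ) 1 := ⟨lt_trans hu0 huv0, lt_of_le_of_lt hv2 h2.2⟩
        have huIoo : u ∈ Ioo (0:ℝ) 1 := ⟨hu0, lt_trans huv0 hvIoo.2⟩
        have := hle huIoo hvIoo huv
        exact (div_le_div_iff₀ (mit_pos hG hvIoo) (mit_pos hG huIoo)).1 this
  -- ENNReal kernels
  set fq : ℝ → ℝ → ℝ≥0∞ := fun r s => ENNReal.ofReal (A (r ⊓ tau h s)) with hfq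
  set gq : ℝ → ℝ → ℝ≥0∞ := fun r s => ENNReal.ofReal (B (r ⊓ tau h s)) with hgq
  have hfanti : ∀ r, 0 ≤ r → r < 1 → Antitone (fq r) := by
    intro r hr0 hr1 s s' hss'
    exact ENNReal.ofReal_le_ofReal (mit_mono hF (le_min hr0 (tau_nonneg _))
      (min_le_min le_rfl (tau_anti hss')) (lt_of_le_of_lt (min_le_left _ _) hr1))
  have hganti : ∀ r, 0 ≤ r → r < 1 → Antitone (gq r) := by
    intro r hr0 hr1 s s' hss'
    exact ENNReal.ofReal_le_ofReal (mit_mono hG (le_min hr0 (tau_nonneg _))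
      (min_le_min le_rfl (tau_anti hss')) (lt_of_le_of_lt (min_le_left _ _) hr1))
  have hfmeas : ∀ r, 0 ≤ r → r < 1 → Measurable (fq r) := fun r h0 h1 =>
    (hfanti r h0 h1).measurable
  have hgmeas : ∀ r, 0 ≤ r → r < 1 → Measurable (gq r) := fun r h0 h1 =>
    (hganti r h0 h1).measurable
  -- pointwise inequality
  have hpt : ∀ s t : ℝ, fq q₂ s * gq q₁ t + fq q₂ t * gq q₁ s ≤
      fq q₁ s * gq q₂ t + fq q₁ t * gq q₂ s := by
    intro s t
    have harg : ∀ (r : ℝ) (s' : ℝ), 0 ≤ r → (0:ℝ) ≤ r ⊓ tau h s' ∧ r ⊓ tau h s' ≤ q₂ ∨ True :=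
      fun _ _ _ => Or.inr trivial
    have hAnn : ∀ s' : ℝ, 0 ≤ A (q₂ ⊓ tau h s') ∧ 0 ≤ A (q₁ ⊓ tau h s') := by
      intro s'
      constructor
      · exact hA0 _ (le_min (le_trans h1.1.le h12) (tau_nonneg _)) (min_le_left _ _)
      · exact hA0 _ (le_min h1.1.le (tau_nonneg _)) (le_trans (min_le_left _ _) h12)
    have hBnn : ∀ s' : ℝ, 0 ≤ B (q₂ ⊓ tau h s') ∧ 0 ≤ B (q₁ ⊓ tau h s') := by
      intro s'
      constructor
      · exact hB0 _ (le_min (le_trans h1.1.le h12) (tau_nonneg _)) (min_le_left _ _)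
      · exact hB0 _ (le_min h1.1.le (tau_nonneg _)) (le_trans (min_le_left _ _) h12)
    have hkey : A (q₂ ⊓ tau h s) * B (q₁ ⊓ tau h t) + A (q₂ ⊓ tau h t) * B (q₁ ⊓ tau h s) ≤
        A (q₁ ⊓ tau h s) * B (q₂ ⊓ tau h t) + A (q₁ ⊓ tau h t) * B (q₂ ⊓ tau h s) := by
      rcases le_total (tau h s) (tau h t) with hst | hst
      · exact key_ineq A B q₁ q₂ (tau h s) (tau h t) h1.1.le h12 hst (tau_nonneg _)
          hBmono hA0 hB0 hcross
      · have := key_ineq A B q₁ q₂ (tau h t) (tau h s) h1.1.le h12 hst (tau_nonneg _)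
          hBmono hA0 hB0 hcross
        linarith
    calc fq q₂ s * gq q₁ t + fq q₂ t * gq q₁ s
        = ENNReal.ofReal (A (q₂ ⊓ tau h s) * B (q₁ ⊓ tau h t) +
            A (q₂ ⊓ tau h t) * B (q₁ ⊓ tau h s)) := by
          rw [ENNReal.ofReal_add (mul_nonneg (hAnn s).1 (hBnn t).2)
            (mul_nonneg (hAnn t).1 (hBnn s).2),
            ENNReal.ofReal_mul (hAnn s).1, ENNReal.ofReal_mul (hAnn t).1]
      _ ≤ ENNReal.ofReal (A (q₁ ⊓ tau h s) * B (q₂ ⊓ tau h t) +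
            A (q₁ ⊓ tau h t) * B (q₂ ⊓ tau h s)) := ENNReal.ofReal_le_ofReal hkey
      _ = fq q₁ s * gq q₂ t + fq q₁ t * gq q₂ s := by
          rw [ENNReal.ofReal_add (mul_nonneg (hAnn s).2 (hBnn t).1)
            (mul_nonneg (hAnn t).2 (hBnn s).1),
            ENNReal.ofReal_mul (hAnn s).2, ENNReal.ofReal_mul (hAnn t).2]
  -- double integral bound
  have hmono2 : (∫⁻ s in Ioi (0:ℝ), ∫⁻ t in Ioi (0:ℝ),
        (fq q₂ s * gq q₁ t + fq q₂ t * gq q₁ s)) ≤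
      ∫⁻ s in Ioi (0:ℝ), ∫⁻ t in Ioi (0:ℝ), (fq q₁ s * gq q₂ t + fq q₁ t * gq q₂ s) :=
    lintegral_mono fun s => lintegral_mono fun t => hpt s t
  -- evaluate both sides
  have heval : ∀ r r' : ℝ, r ∈ Ioo (0:ℝ) 1 → r' ∈ Ioo (0:ℝ) 1 →
      (∫⁻ s in Ioi (0:ℝ), ∫⁻ t in Ioi (0:ℝ), (fq r s * gq r' t + fq r t * gq r' s)) =
        (∫⁻ s in Ioi (0:ℝ), fq r s) * (∫⁻ t in Ioi (0:ℝ), gq r' t) +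
          (∫⁻ t in Ioi (0:ℝ), fq r t) * (∫⁻ s in Ioi (0:ℝ), gq r' s) := by
    intro r r' hr hr'
    have hfin1 : (∫⁻ t in Ioi (0:ℝ), gq r' t) ≠ ⊤ := by
      rw [hgq, ← psi_repr hG hdist hconv hr']
      exact ENNReal.ofReal_ne_top
    have hfin2 : (∫⁻ t in Ioi (0:ℝ), fq r t) ≠ ⊤ := by
      rw [hfq, ← psi_repr hF hdist hconv hr]
      exact ENNReal.ofReal_ne_top
    have inner : ∀ s : ℝ, (∫⁻ t in Ioi (0:ℝ), (fq r s * gq r' t + fq r t * gq r' s)) =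
        fq r s * (∫⁻ t in Ioi (0:ℝ), gq r' t) + (∫⁻ t in Ioi (0:ℝ), fq r t) * gq r' s := by
      intro s
      rw [lintegral_add_left ((hgmeas r' hr'.1.le hr'.2).const_mul _)]
      rw [lintegral_const_mul' _ _ ENNReal.ofReal_ne_top,
        lintegral_mul_const' _ _ ENNReal.ofReal_ne_top]
    calc (∫⁻ s in Ioi (0:ℝ), ∫⁻ t in Ioi (0:ℝ), (fq r s * gq r' t + fq r t * gq r' s))
        = ∫⁻ s in Ioi (0:ℝ), (fq r s * (∫⁻ t in Ioi (0:ℝ), gq r' t) +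
            (∫⁻ t in Ioi (0:ℝ), fq r t) * gq r' s) := by
          exact lintegral_congr fun s => inner s
      _ = (∫⁻ s in Ioi (0:ℝ), fq r s) * (∫⁻ t in Ioi (0:ℝ), gq r' t) +
          (∫⁻ t in Ioi (0:ℝ), fq r t) * (∫⁻ s in Ioi (0:ℝ), gq r' s) := by
          rw [lintegral_add_left ((hfmeas r hr.1.le hr.2).mul_const _),
            lintegral_mul_const' _ _ hfin1, lintegral_const_mul' _ _ hfin2]
  rw [heval q₂ q₁ h2 h1, heval q₁ q₂ h1 h2] at hmono2
  simp only [hfq, hgq, hA, hB] at hmono2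
  rw [← psi_repr hF hdist hconv h1, ← psi_repr hF hdist hconv h2,
    ← psi_repr hG hdist hconv h1, ← psi_repr hG hdist hconv h2] at hmono2
  have hΨF1nn : 0 ≤ ∫ x in (0:ℝ)..(quantile F q₁), Hfn h (F x) :=
    intervalIntegral.integral_nonneg (quantile_nonneg hF h1.2)
      (fun x _ => Hfn_nonneg hdist ⟨cdf_nonneg' hF x, (cdf_lt_one' hF x).le⟩)
  have hΨF2nn : 0 ≤ ∫ x in (0:ℝ)..(quantile F q₂), Hfn h (F x) :=
    intervalIntegral.integral_nonneg (quantile_nonneg hF h2.2)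
      (fun x _ => Hfn_nonneg hdist ⟨cdf_nonneg' hF x, (cdf_lt_one' hF x).le⟩)
  have hΨG1nn : 0 ≤ ∫ x in (0:ℝ)..(quantile G q₁), Hfn h (G x) :=
    intervalIntegral.integral_nonneg (quantile_nonneg hG h1.2)
      (fun x _ => Hfn_nonneg hdist ⟨cdf_nonneg' hG x, (cdf_lt_one' hG x).le⟩)
  have hΨG2nn : 0 ≤ ∫ x in (0:ℝ)..(quantile G q₂), Hfn h (G x) :=
    intervalIntegral.integral_nonneg (quantile_nonneg hG h2.2)
      (fun x _ => Hfn_nonneg hdist ⟨cdf_nonneg' hG x, (cdf_lt_one' hG x).le⟩)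
  rw [← ENNReal.ofReal_mul hΨF2nn, ← ENNReal.ofReal_mul hΨF1nn,
    ← ENNReal.ofReal_add (mul_nonneg hΨF2nn hΨG1nn) (mul_nonneg hΨF2nn hΨG1nn),
    ← ENNReal.ofReal_add (mul_nonneg hΨF1nn hΨG2nn) (mul_nonneg hΨF1nn hΨG2nn)] at hmono2
  have hfinal := (ENNReal.ofReal_le_ofReal_iff
    (by nlinarith [mul_nonneg hΨF1nn hΨG2nn])).1 hmono2
  linarith


lemma quantile_distorted (hF : CDF F) (hdist : IsDistortionFn h)
    (hconv : ConvexOn ℝ (Icc 0 1) h) {p : ℝ} (hp : p ∈ Ioo (0:ℝ) 1) :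
    quantile (distortedCDF h F) p = quantile F (phi h p) := by
  obtain ⟨hφmem, hφiff⟩ := phi_spec hdist hconv hp
  have hφIoo : phi h p ∈ Ioo (0:ℝ) 1 := ⟨hφmem.1, lt_of_le_of_lt hφmem.2 hp.2⟩
  obtain ⟨hcpos, hFc, hciff⟩ := quantile_spec' hF hφIoo
  have hset : {x : ℝ | p ≤ distortedCDF h F x} = Ici (quantile F (phi h p)) := by
    ext x
    have hFx : F x ∈ Ico (0:ℝ) 1 := ⟨cdf_nonneg' hF x, cdf_lt_one' hF x⟩
    have he : distortedCDF h F x = Hfn h (F x) := rfl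
    simp only [mem_setOf_eq, he, mem_Ici]
    rw [hφiff (F x) hFx]
    exact hciff x
  rw [quantile, hset, csInf_Ici]

lemma mit_distorted (hF : CDF F) (hdist : IsDistortionFn h)
    (hconv : ConvexOn ℝ (Icc 0 1) h) {p : ℝ} (hp : p ∈ Ioo (0:ℝ) 1) :
    mitIntegral (distortedCDF h F) p = ∫ x in (0:ℝ)..(quantile F (phi h p)), Hfn h (F x) := by
  rw [mitIntegral, quantile_distorted hF hdist hconv hp]
  rfl

lemma psi_pos (hG : CDF G) (hdist : IsDistortionFn h)
    (hconv : ConvexOn ℝ (Icc 0 1) h) {q : ℝ} (hq : q ∈ Ioo (0:ℝ) 1) :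
    0 < ∫ x in (0:ℝ)..(quantile G q), Hfn h (G x) := by
  have hmit := mit_pos hG hq
  have hrange : ∀ x : ℝ, G x ∈ Icc (0:ℝ) 1 :=
    fun x => ⟨cdf_nonneg' hG x, (cdf_lt_one' hG x).le⟩
  have hHGmono : Monotone (fun x => Hfn h (G x)) :=
    fun x y hxy => Hfn_mono hdist (hrange x) (hrange y) (hG.mono hxy)
  have hmono : mitIntegral G q ≤ ∫ x in (0:ℝ)..(quantile G q), Hfn h (G x) := by
    rw [mitIntegral]
    exact intervalIntegral.integral_mono_on (quantile_nonneg hG hq.2)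
      (hG.cont.intervalIntegrable _ _) hHGmono.intervalIntegrable
      (fun x _ => Hfn_ge_id hdist hconv (hrange x))
  linarith


end QmitAux

open QmitAux in
/-- **Remark 2 (preservation of the qmit order by convex distortions).**
Let `X`, `Y` be nonnegative absolutely continuous random variables with finite means and
strictly increasing distribution functions `F`, `G`, and let `h` be a convex, strictly
increasing distortion function.  If `X ≤_qmit Y`, then `X_h ≤_qmit Y_h`. -/
theorem qmit_preserved_by_convex_distortion
    (F G f g h : ℝ → ℝ)
    (hF : IsNonnegCDF F) (hG : IsNonnegCDF G)
    (hFstrict : StrictMonoOn F (Ici 0)) (hGstrict : StrictMonoOn G (Ici 0))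
    (hfd : ∀ x : ℝ, HasDerivAt F (f x) x) (hgd : ∀ x : ℝ, HasDerivAt G (g x) x)
    (hFmean : IntegrableOn (fun x => 1 - F x) (Ioi 0) volume)
    (hGmean : IntegrableOn (fun x => 1 - G x) (Ioi 0) volume)
    (hdist : IsDistortionFn h) (hstrict : StrictMonoOn h (Icc 0 1))
    (hconv : ConvexOn ℝ (Icc 0 1) h)
    (hle : QMIT_le F G) :
    QMIT_le (distortedCDF h F) (distortedCDF h G) := by
  have hFcont : Continuous F := continuous_iff_continuousAt.2
    fun x => (hfd x).differentiableAt.continuousAt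
  have hGcont : Continuous G := continuous_iff_continuousAt.2
    fun x => (hgd x).differentiableAt.continuousAt
  have hFc : CDF F := ⟨hF.1, hF.2.1, hFstrict, hFcont, hF.2.2⟩
  have hGc : CDF G := ⟨hG.1, hG.2.1, hGstrict, hGcont, hG.2.2⟩
  intro p₁ hp₁ p₂ hp₂ h12
  have hφ₁ := (phi_spec (h := h) hdist hconv hp₁).1
  have hφ₂ := (phi_spec (h := h) hdist hconv hp₂).1
  have hq₁ : phi h p₁ ∈ Ioo (0:ℝ) 1 := ⟨hφ₁.1, lt_of_le_of_lt hφ₁.2 hp₁.2⟩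
  have hq₂ : phi h p₂ ∈ Ioo (0:ℝ) 1 := ⟨hφ₂.1, lt_of_le_of_lt hφ₂.2 hp₂.2⟩
  have hq12 : phi h p₁ ≤ phi h p₂ := phi_mono hdist hconv hp₁ hp₂ h12
  simp only [mit_distorted hFc hdist hconv hp₁, mit_distorted hFc hdist hconv hp₂,
    mit_distorted hGc hdist hconv hp₁, mit_distorted hGc hdist hconv hp₂]
  have hcross := psi_cross hFc hGc hdist hconv hle hq₁ hq₂ hq12
  have hpos₁ := psi_pos (h := h) hGc hdist hconv hq₁
  have hpos₂ := psi_pos (h := h) hGc hdist hconv hq₂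
  rw [div_le_div_iff₀ hpos₂ hpos₁]
  exact hcross
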